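/- If A is a q-ary (m,n,k) MRD code (a set of q^{nk} matrices in F_q^{m×n} with minimum rank distance n−k+1), then its lift λ(A) = {rowspace(I_m | A) : A ∈ A} is a (m+n, q^{nk}, 2(n−k+1); m) constant-dimension subspace code in F_q^{m+n}. -/

import Mathlib

open Matrix


/-- The lifting map: `A ∈ F^{m×n}` is sent to the row space of `(I_m | A) ⊆ F^{m+n}`. -/
noncomputable def liftMatrix {F : Type*} [Field F] {m n : ℕ} (A : Matrix (Fin m) (Fin n) F) :
    Submodule F (Fin m ⊕ Fin n → F) :=
  LinearMap.range (Matrix.vecMulLinear (Matrix.fromCols (1 : Matrix (Fin m) (Fin m) F) A))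

lemma lift_apply {F : Type*} [Field F] {m n : ℕ} (A : Matrix (Fin m) (Fin n) F)
    (v : Fin m → F) :
    Matrix.vecMulLinear (Matrix.fromCols (1 : Matrix (Fin m) (Fin m) F) A) v
      = Sum.elim v (v ᵥ* A) := by
  simp [Matrix.vecMul_one]

lemma lift_apply' {F : Type*} [Field F] {m n : ℕ} (A : Matrix (Fin m) (Fin n) F)
    (v : Fin m → F) :
    v ᵥ* Matrix.fromCols (1 : Matrix (Fin m) (Fin m) F) A = Sum.elim v (v ᵥ* A) := by
  simp [Matrix.vecMul_one]

lemma lift_injective {F : Type*} [Field F] {m n : ℕ} :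
    Function.Injective (liftMatrix (F := F) (m := m) (n := n)) := by
  intro A B h
  have key : ∀ v : Fin m → F, v ᵥ* A = v ᵥ* B := by
    intro v
    have hmem : Sum.elim v (v ᵥ* A) ∈ liftMatrix B := by
      rw [← h]
      exact ⟨v, lift_apply A v⟩
    obtain ⟨w, hw⟩ := hmem
    rw [lift_apply] at hw
    have hw1 : w = v := funext fun i => congrFun hw (Sum.inl i)
    have hw2 : w ᵥ* B = v ᵥ* A := funext fun j => congrFun hw (Sum.inr j)
    rw [hw1] at hw2
    exact hw2.symm
  ext i j
  have := congrFun (key (Pi.single i 1)) j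
  simpa [Matrix.single_vecMul] using this

lemma lift_finrank {F : Type*} [Field F] {m n : ℕ} (A : Matrix (Fin m) (Fin n) F) :
    Module.finrank F ↥(liftMatrix A) = m := by
  have hinj : Function.Injective
      (Matrix.vecMulLinear (Matrix.fromCols (1 : Matrix (Fin m) (Fin m) F) A)) := by
    intro v w hvw
    rw [lift_apply, lift_apply] at hvw
    exact funext fun i => congrFun hvw (Sum.inl i)
  rw [liftMatrix, LinearMap.finrank_range_of_inj hinj]
  simp

lemma lift_inf {F : Type*} [Field F] {m n : ℕ} (A B : Matrix (Fin m) (Fin n) F) :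
    liftMatrix A ⊓ liftMatrix B
      = Submodule.map (Matrix.vecMulLinear (Matrix.fromCols (1 : Matrix (Fin m) (Fin m) F) A))
          (LinearMap.ker (Matrix.vecMulLinear (A - B))) := by
  ext x
  simp only [Submodule.mem_inf, liftMatrix, LinearMap.mem_range, Submodule.mem_map,
    LinearMap.mem_ker, Matrix.vecMulLinear_apply, lift_apply']
  constructor
  · rintro ⟨⟨v, hv⟩, ⟨w, hw⟩⟩
    have hvw : w = v := by
      funext i
      exact (congrFun hw (Sum.inl i)).trans (congrFun hv (Sum.inl i)).symm
    subst hvw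
    have h2 : w ᵥ* A = w ᵥ* B := by
      funext j
      exact (congrFun hv (Sum.inr j)).trans (congrFun hw (Sum.inr j)).symm
    exact ⟨w, by rw [Matrix.vecMul_sub, h2, sub_self], hv⟩
  · rintro ⟨v, hv, rfl⟩
    rw [Matrix.vecMul_sub, sub_eq_zero] at hv
    exact ⟨⟨v, rfl⟩, ⟨v, by rw [hv]⟩⟩

lemma finrank_ker_vecMulLinear {F : Type*} [Field F] {m n : ℕ}
    (M : Matrix (Fin m) (Fin n) F) :
    Module.finrank F ↥(LinearMap.ker (Matrix.vecMulLinear M)) + M.rank = m := by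
  have h1 : Matrix.vecMulLinear M = Matrix.mulVecLin Mᵀ := (Matrix.mulVecLin_transpose M).symm
  have h2 := LinearMap.finrank_range_add_finrank_ker (Matrix.mulVecLin Mᵀ)
  rw [h1]
  have h3 : Module.finrank F (LinearMap.range (Matrix.mulVecLin Mᵀ)) = Mᵀ.rank := rfl
  rw [h3, Matrix.rank_transpose] at h2
  simp only [Module.finrank_pi, Fintype.card_fin] at h2
  omega

/-- Lifting an `(m,n,k)` MRD code over `F_q` yields an
`(m+n, q^{nk}, 2(n-k+1); m)` constant-dimension subspace code. -/
theorem lifted_MRD_is_subspace_code (F : Type*) [Field F] [Fintype F] (m n k : ℕ)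
    (hkm : k ≤ m) (hmn : m ≤ n) (A : Set (Matrix (Fin m) (Fin n) F))
    (hcard : A.ncard = (Fintype.card F) ^ (n * k))
    (hd : ∀ X ∈ A, ∀ Y ∈ A, X ≠ Y → n - k + 1 ≤ (X - Y).rank) :
    (liftMatrix '' A).ncard = (Fintype.card F) ^ (n * k) ∧
      (∀ U ∈ liftMatrix '' A, Module.finrank F ↥U = m) ∧
      ∀ U ∈ liftMatrix '' A, ∀ V ∈ liftMatrix '' A, U ≠ V →
        2 * (n - k + 1) ≤ Module.finrank F ↥(U ⊔ V) - Module.finrank F ↥(U ⊓ V) := by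
  refine ⟨?_, ?_, ?_⟩
  · rw [Set.ncard_image_of_injective _ lift_injective, hcard]
  · rintro U ⟨X, _, rfl⟩
    exact lift_finrank X
  · rintro U ⟨X, hX, rfl⟩ V ⟨Y, hY, rfl⟩ hUV
    have hXY : X ≠ Y := fun h => hUV (by rw [h])
    have hr := hd X hX Y hY hXY
    have hsupinf : Module.finrank F ↥(liftMatrix X ⊔ liftMatrix Y)
        + Module.finrank F ↥(liftMatrix X ⊓ liftMatrix Y)
        = Module.finrank F ↥(liftMatrix X) + Module.finrank F ↥(liftMatrix Y) :=
      Submodule.finrank_sup_add_finrank_inf_eq _ _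
    rw [lift_finrank, lift_finrank] at hsupinf
    have hker := finrank_ker_vecMulLinear (X - Y)
    have hinf : Module.finrank F ↥(liftMatrix X ⊓ liftMatrix Y)
        ≤ Module.finrank F ↥(LinearMap.ker (Matrix.vecMulLinear (X - Y))) := by
      rw [lift_inf]
      exact Submodule.finrank_map_le _ _
    omega
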